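/- There exists N such that for all n ≥ N, k̄_n ≤ j_n; informally, the gambler accepts the value a later than it accepts the value b not having seen the value a. -/

import Mathlib

/-- Auxiliary sequence for the thresholds `φ^{(n)}_k`, counted backwards from time `n`:
`phiAux b p n m = φ^{(n)}_{n-m}`. -/
noncomputable def phiAux (b p : ℝ) (n : ℕ) : ℕ → ℝ
  | 0 => (1 + b * p) / n
  | m + 1 =>
      (1 / (n : ℝ) ^ 2) * max (n : ℝ) (phiAux b p n m)
        + (p / n) * max b (phiAux b p n m)
        + (1 - p / n - 1 / (n : ℝ) ^ 2) * max 0 (phiAux b p n m)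

/-- The threshold `φ^{(n)}_k`: the expected future reward of the optimal rule at time `k`
given that the value `a` has already been probed.  Defined by `φ^{(n)}_n = (1+b·p)/n` and,
for `1 ≤ k < n`,
`φ^{(n)}_k = (1/n²)·max(n, φ^{(n)}_{k+1}) + (p/n)·max(b, φ^{(n)}_{k+1})
  + (1 − p/n − 1/n²)·max(0, φ^{(n)}_{k+1})`. -/
noncomputable def phi (b p : ℝ) (n k : ℕ) : ℝ := phiAux b p n (n - k)

/-- Auxiliary sequence for the thresholds `φ̄^{(n)}_k`, counted backwards from time `n`:
`phibarAux a b p n m = φ̄^{(n)}_{n-m}`. -/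
noncomputable def phibarAux (a b p : ℝ) (n : ℕ) : ℕ → ℝ
  | 0 => a
  | m + 1 =>
      max a (phiAux b p n m) / ((m : ℝ) + 2)
        + (1 - 1 / ((m : ℝ) + 2)) *
            ((1 / (n : ℝ) ^ 2) * max (n : ℝ) (phibarAux a b p n m)
              + (p / n) * max b (phibarAux a b p n m)
              + (1 - p / n - 1 / (n : ℝ) ^ 2) * max 0 (phibarAux a b p n m))

/-- The threshold `φ̄^{(n)}_k`: the expected future reward of the optimal rule at time `k`
given that the value `a` has not been probed yet.  Defined by `φ̄^{(n)}_n = a` and, for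
`1 ≤ k < n`,
`φ̄^{(n)}_k = max(a, φ^{(n)}_{k+1})/(n+1−k) + (1 − 1/(n+1−k))·[(1/n²)·max(n, φ̄^{(n)}_{k+1})
  + (p/n)·max(b, φ̄^{(n)}_{k+1}) + (1 − p/n − 1/n²)·max(0, φ̄^{(n)}_{k+1})]`. -/
noncomputable def phibar (a b p : ℝ) (n k : ℕ) : ℝ := phibarAux a b p n (n - k)

/-- `j_n`: the earliest time `k ∈ {1,…,n}` with `a ≥ φ^{(n)}_k`. -/
noncomputable def jn (a b p : ℝ) (n : ℕ) : ℕ :=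
  sInf {k : ℕ | 1 ≤ k ∧ k ≤ n ∧ phi b p n k ≤ a}

/-- `k_n`: the earliest time `k ∈ {1,…,n}` with `b ≥ φ^{(n)}_k`. -/
noncomputable def kn (b p : ℝ) (n : ℕ) : ℕ :=
  sInf {k : ℕ | 1 ≤ k ∧ k ≤ n ∧ phi b p n k ≤ b}

/-- `k̄_n`: the earliest time `k ∈ {1,…,n}` with `b ≥ φ̄^{(n)}_k`. -/
noncomputable def kbarn (a b p : ℝ) (n : ℕ) : ℕ :=
  sInf {k : ℕ | 1 ≤ k ∧ k ≤ n ∧ phibar a b p n k ≤ b}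

open Real Filter


lemma F_deriv (t : ℝ) (ht : 0 ≤ t) :
    HasDerivAt (fun s : ℝ => 2*s/(1+s) - 2*Real.log (1+s) + Real.log (1+s^2))
      (2/(1+t)^2 - 2*(1/(1+t)) + 2*t/(1+t^2)) t := by
  have h1t : (1:ℝ) + t ≠ 0 := by nlinarith
  have h1t2 : (1:ℝ) + t^2 ≠ 0 := by nlinarith [sq_nonneg t]
  have hd1 : HasDerivAt (fun s : ℝ => 2*s/(1+s)) (2/(1+t)^2) t := by
    have hnum : HasDerivAt (fun s : ℝ => 2*s) 2 t := by
      simpa using (hasDerivAt_id t).const_mul 2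
    have hden : HasDerivAt (fun s : ℝ => 1+s) 1 t := by
      simpa using (hasDerivAt_id t).const_add 1
    have h : HasDerivAt (fun s : ℝ => 2*s/(1+s)) ((2 * (1 + t) - 2 * t * 1) / (1 + t) ^ 2) t :=
      hnum.div hden h1t
    convert h using 1
    ring
  have hd2 : HasDerivAt (fun s : ℝ => 2*Real.log (1+s)) (2*(1/(1+t))) t := by
    have hden : HasDerivAt (fun s : ℝ => 1+s) 1 t := by
      simpa using (hasDerivAt_id t).const_add 1
    have h := (hden.log h1t).const_mul 2
    convert h using 1
  have hd3 : HasDerivAt (fun s : ℝ => Real.log (1+s^2)) (2*t/(1+t^2)) t := by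
    have hden : HasDerivAt (fun s : ℝ => 1+s^2) (2*t) t := by
      simpa using ((hasDerivAt_pow 2 t).const_add 1)
    have h := hden.log h1t2
    convert h using 1
  exact (hd1.sub hd2).add hd3

lemma F_ineq {x : ℝ} (hx : 0 ≤ x) :
    Real.log ((1+x)^2/(1+x^2)) ≤ 2*x/(1+x) := by
  have h1x : (0:ℝ) < 1 + x := by nlinarith
  have h1x2 : (0:ℝ) < 1 + x^2 := by nlinarith [sq_nonneg x]
  have hlog : Real.log ((1+x)^2/(1+x^2)) = 2*Real.log (1+x) - Real.log (1+x^2) := by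
    rw [Real.log_div (by positivity) (by positivity), Real.log_pow]
    push_cast; ring
  rw [hlog]
  set F : ℝ → ℝ := fun s => 2*s/(1+s) - 2*Real.log (1+s) + Real.log (1+s^2) with hF
  have hcont : ContinuousOn F (Set.Ici (0:ℝ)) := by
    have c1 : ContinuousOn (fun s : ℝ => 2*s/(1+s)) (Set.Ici 0) := by
      apply ContinuousOn.div (by fun_prop) (by fun_prop)
      intro s hs; simp only [Set.mem_Ici] at hs; nlinarith
    have c2 : ContinuousOn (fun s : ℝ => 2*Real.log (1+s)) (Set.Ici 0) := by
      apply ContinuousOn.mul continuousOn_const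
      apply ContinuousOn.log (by fun_prop)
      intro s hs; simp only [Set.mem_Ici] at hs; nlinarith
    have c3 : ContinuousOn (fun s : ℝ => Real.log (1+s^2)) (Set.Ici 0) := by
      apply ContinuousOn.log (by fun_prop)
      intro s hs; simp only [Set.mem_Ici] at hs; nlinarith [sq_nonneg s]
    exact (c1.sub c2).add c3
  have hmono : MonotoneOn F (Set.Ici (0:ℝ)) := by
    apply monotoneOn_of_deriv_nonneg (convex_Ici 0) hcont
    · intro t ht
      rw [interior_Ici] at ht
      exact (F_deriv t (le_of_lt ht)).differentiableAt.differentiableWithinAt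
    · intro t ht
      rw [interior_Ici] at ht
      rw [(F_deriv t ht.le).deriv]
      have h1t : (0:ℝ) < 1 + t := by nlinarith [Set.mem_Ioi.mp ht]
      have h1t2 : (0:ℝ) < 1 + t^2 := by nlinarith [sq_nonneg t]
      have heq : 2/(1+t)^2 - 2*(1/(1+t)) + 2*t/(1+t^2) = 4*t^2/((1+t)^2*(1+t^2)) := by
        field_simp
        ring
      rw [heq]
      positivity
  have h0 : F 0 = 0 := by simp [hF]
  have hfin := hmono (Set.self_mem_Ici) (Set.mem_Ici.2 hx) hx
  rw [h0] at hfin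
  simp only [hF] at hfin
  linarith


lemma strict_I (a b p : ℝ)
    (ha : 0 < a) (ha1 : a < 1) (hb : 1 < b) (hp : 0 < p)
    (hI : (1 + b * p) / (1 + (b - a) * p) * Real.log ((1 + b * p) / (1 + (b - a) * p)) ≤ a * p)
    (hIII : (1 - (2 - p) * (b - a)) / (1 + p * (b - a))
        < 1 + (1 / p) * Real.log ((1 + p * (b - a)) / (1 + p * b))) :
    (1 + b * p) / (1 + (b - a) * p) * Real.log ((1 + b * p) / (1 + (b - a) * p)) < a * p := by
  rcases lt_or_eq_of_le hI with hlt | h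
  · exact hlt
  exfalso
  have hba : 0 < b - a := by linarith
  set x : ℝ := (b - a) * p with hxdef
  have hx : 0 < x := by rw [hxdef]; positivity
  clear_value x
  have h1x : (0:ℝ) < 1 + x := by linarith
  have h1bp : (0:ℝ) < 1 + b * p := by nlinarith
  set r : ℝ := (1 + b * p) / (1 + x) with hrx
  clear_value r
  have hr1 : 1 < r := by
    rw [hrx, lt_div_iff₀ h1x]
    nlinarith
  have hr0 : 0 < r := by linarith
  have hr1x : r * (1 + x) = 1 + b * p := by
    rw [hrx]; field_simp
  have key1 : a * p = (r - 1) * (1 + x) := by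
    linear_combination (-1) * hr1x + hxdef
  have heq : r * Real.log r = a * p := h
  have hloginv : Real.log ((1 + p * (b - a)) / (1 + p * b)) = - Real.log r := by
    have hflip : (1 + p * (b - a)) / (1 + p * b) = r⁻¹ := by
      rw [hrx, inv_div, hxdef]; ring_nf
    rw [hflip, Real.log_inv]
  rw [hloginv] at hIII
  have hpbx : 1 + p * (b-a) = 1 + x := by rw [hxdef]; ring
  rw [hpbx] at hIII
  have hlogr : Real.log r < 2 * x / (1 + x) := by
    have h' : (1 - (2-p)*(b-a)) < (1 + 1/p * (-Real.log r)) * (1+x) :=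
      (div_lt_iff₀ h1x).mp hIII
    have h'' := mul_lt_mul_of_pos_left h' hp
    have hinv : p * (1/p) = 1 := by field_simp
    have hexp : p * ((1 + 1/p * (-Real.log r)) * (1+x)) = (p - Real.log r)*(1+x) := by
      linear_combination ((1+x) * (-Real.log r)) * hinv
    rw [hexp] at h''
    have hstep : (1+x)*Real.log r < 2*x := by nlinarith [h'', hxdef]
    rw [lt_div_iff₀ h1x]
    linarith
  have hlogr_eq : Real.log r = (r - 1) * (1 + x) / r := by
    have hh : r * Real.log r = (r-1)*(1+x) := by rw [heq, key1]
    field_simp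
    linear_combination hh
  set ρ : ℝ := (1+x)^2/(1+x^2) with hρdef
  have h1x2 : (0:ℝ) < 1 + x^2 := by positivity
  have hρ1 : 1 < ρ := by
    rw [hρdef, lt_div_iff₀ h1x2]
    nlinarith [hx]
  clear_value ρ
  have hρne : ρ - 1 ≠ 0 := sub_ne_zero.mpr (ne_of_gt hρ1)
  have hrρ : r < ρ := by
    rw [hlogr_eq] at hlogr
    have h2 : (r-1)*(1+x)*(1+x) < 2*x*r := (div_lt_div_iff₀ hr0 h1x).mp hlogr
    rw [hρdef, lt_div_iff₀ h1x2]
    nlinarith [h2]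
  have hμ : 0 < (r - 1)/(ρ - 1) := by
    apply div_pos <;> linarith
  have hlam : 0 < (ρ - r)/(ρ - 1) := by
    apply div_pos <;> linarith
  have hsum : (ρ - r)/(ρ - 1) + (r - 1)/(ρ - 1) = 1 := by
    field_simp [hρne]; ring
  have hcomb : (ρ - r)/(ρ - 1) * (1:ℝ) + (r - 1)/(ρ - 1) * ρ = r := by
    field_simp [hρne]
    ring
  have hconv := Real.strictConvexOn_mul_log.2 (Set.mem_Ici.2 (by norm_num : (0:ℝ) ≤ 1))
      (Set.mem_Ici.2 (by linarith : (0:ℝ) ≤ ρ)) (by linarith : (1:ℝ) ≠ ρ) hlam hμ hsum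
  simp only [smul_eq_mul] at hconv
  rw [hcomb] at hconv
  simp only [Real.log_one, mul_zero, mul_zero, zero_add] at hconv
  have hFρ : ρ * Real.log ρ ≤ (1 + x) * (ρ - 1) := by
    have hF := F_ineq hx.le
    rw [← hρdef] at hF
    have hρ1eq : ρ - 1 = 2*x/(1+x^2) := by
      rw [hρdef]; field_simp; ring
    calc ρ * Real.log ρ ≤ ρ * (2*x/(1+x)) := by
          apply mul_le_mul_of_nonneg_left hF (by linarith)
      _ = (1+x) * (ρ - 1) := by
          rw [hρ1eq, hρdef]; field_simp
  have hfinal : r * Real.log r < (r - 1) * (1 + x) := by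
    calc r * Real.log r < (r - 1)/(ρ - 1) * (ρ * Real.log ρ) := hconv
      _ ≤ (r - 1)/(ρ - 1) * ((1+x) * (ρ-1)) := by
          apply mul_le_mul_of_nonneg_left hFρ (le_of_lt hμ)
      _ = (r - 1) * (1 + x) := by field_simp
  linarith [hfinal, key1, heq]

namespace Stmt7


noncomputable def al (p : ℝ) (n : ℕ) : ℝ := 1 - p/(n:ℝ) - 1/(n:ℝ)^2
noncomputable def qq (b p : ℝ) (n : ℕ) : ℝ := (1 + b*p)/(n:ℝ)
noncomputable def BB (b p : ℝ) (n : ℕ) : ℝ := (n:ℝ)*(1+b*p)/(p*(n:ℝ)+1)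
noncomputable def AA (a b p : ℝ) (n : ℕ) : ℝ :=
  (a + qq b p n - BB b p n)*(n:ℝ)^2/(p*(n:ℝ)+1)
noncomputable def th (a b p : ℝ) (n : ℕ) : ℝ :=
  (BB b p n - a)/(BB b p n - qq b p n)
noncomputable def LL (a b p : ℝ) (n : ℕ) : ℝ :=
  -Real.log (th a b p n) * (n:ℝ)^2/(p*(n:ℝ)+1)

section

variable {a b p : ℝ} {n : ℕ}

lemma hn_pos (hn : 1 ≤ n) : (0:ℝ) < (n:ℝ) := by exact_mod_cast Nat.lt_of_lt_of_le Nat.zero_lt_one hn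

lemma hpn_pos (hp : 0 < p) (hn : 1 ≤ n) : (0:ℝ) < p*(n:ℝ)+1 := by
  have := hn_pos hn; positivity

lemma one_sub_al (hn : 1 ≤ n) : 1 - al p n = (p*(n:ℝ)+1)/(n:ℝ)^2 := by
  have h0 := hn_pos hn
  rw [al]; field_simp; ring

lemma idB (hp : 0 < p) (hn : 1 ≤ n) : BB b p n * (1 - al p n) = qq b p n := by
  have h0 := (hn_pos hn).ne'
  have h1 := (hpn_pos hp hn).ne'
  rw [one_sub_al hn, BB, qq]
  field_simp

lemma idA (hp : 0 < p) (hn : 1 ≤ n) :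
    AA a b p n * (1 - al p n) = a + qq b p n - BB b p n := by
  have h0 := (hn_pos hn).ne'
  have h1 := (hpn_pos hp hn).ne'
  rw [one_sub_al hn, AA]
  field_simp

lemma phiAux_nonneg (hb : 1 < b) (hp : 0 < p) (hn : 1 ≤ n) (hal : 0 ≤ al p n) :
    ∀ m, 0 ≤ phiAux b p n m := by
  intro m
  induction m with
  | zero =>
      rw [phiAux]
      have := hn_pos hn
      positivity
  | succ m ih =>
      rw [phiAux]
      have h0 := hn_pos hn
      have t1 : (0:ℝ) ≤ (1 / (n : ℝ) ^ 2) * max (n : ℝ) (phiAux b p n m) := by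
        apply mul_nonneg (by positivity)
        exact le_trans h0.le (le_max_left _ _)
      have t2 : (0:ℝ) ≤ (p / n) * max b (phiAux b p n m) := by
        apply mul_nonneg (by positivity)
        exact le_trans (by linarith) (le_max_left _ _)
      have t3 : (0:ℝ) ≤ (1 - p / n - 1 / (n : ℝ) ^ 2) * max 0 (phiAux b p n m) := by
        apply mul_nonneg
        · rw [al] at hal; linarith
        · exact le_max_left _ _
      linarith

lemma phiAux_le_succ (hb : 1 < b) (hp : 0 < p) (hn : 1 ≤ n) (hal : 0 ≤ al p n) (m : ℕ) :
    phiAux b p n m ≤ phiAux b p n (m+1) := by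
  have h0 := hn_pos hn
  have hx := phiAux_nonneg hb hp hn hal m
  set x := phiAux b p n m with hxd
  rw [phiAux, ← hxd]
  have e1 : (1 / (n : ℝ) ^ 2) * x ≤ (1 / (n : ℝ) ^ 2) * max (n : ℝ) x := by
    apply mul_le_mul_of_nonneg_left (le_max_right _ _) (by positivity)
  have e2 : (p / n) * x ≤ (p / n) * max b x := by
    apply mul_le_mul_of_nonneg_left (le_max_right _ _) (by positivity)
  have e3 : (1 - p / n - 1 / (n : ℝ) ^ 2) * x ≤ (1 - p / n - 1 / (n : ℝ) ^ 2) * max 0 x := by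
    apply mul_le_mul_of_nonneg_left (le_max_right _ _)
    rw [al] at hal; linarith
  have hsumc : (1 / (n : ℝ) ^ 2) * x + (p / n) * x + (1 - p / n - 1 / (n : ℝ) ^ 2) * x = x := by
    field_simp
    ring
  linarith

lemma phiAux_lin (hb : 1 < b) (hp : 0 < p) (hn : 1 ≤ n) (hal : 0 ≤ al p n)
    (ha1 : a < 1) (hbn : b ≤ (n:ℝ)) (m : ℕ) (h : phiAux b p n m ≤ a) :
    phiAux b p n (m+1) = qq b p n + al p n * phiAux b p n m := by
  have h0 := hn_pos hn
  have hx0 := phiAux_nonneg hb hp hn hal m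
  have hmn : max (n:ℝ) (phiAux b p n m) = (n:ℝ) := max_eq_left (by linarith)
  have hmb : max b (phiAux b p n m) = b := max_eq_left (by linarith)
  have hm0 : max 0 (phiAux b p n m) = phiAux b p n m := max_eq_right hx0
  rw [phiAux, hmn, hmb, hm0, qq, al]
  field_simp

lemma phiAux_closed (hb : 1 < b) (hp : 0 < p) (hn : 1 ≤ n) (hal : 0 ≤ al p n)
    (ha1 : a < 1) (hbn : b ≤ (n:ℝ)) :
    ∀ m, phiAux b p n m ≤ a →
      phiAux b p n m = BB b p n + (qq b p n - BB b p n) * (al p n)^m := by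
  intro m
  induction m with
  | zero => intro _; rw [phiAux]; rw [pow_zero]; rw [qq]; ring
  | succ m ih =>
      intro h1
      have h0 : phiAux b p n m ≤ a := le_trans (phiAux_le_succ hb hp hn hal m) h1
      rw [phiAux_lin hb hp hn hal ha1 hbn m h0, ih h0]
      have hB := idB hp hn (b := b)
      rw [pow_succ]
      linear_combination (-1) * hB

lemma th_le (hb : 1 < b) (hp : 0 < p) (hn : 1 ≤ n) (hal : 0 ≤ al p n)
    (ha1 : a < 1) (hbn : b ≤ (n:ℝ)) (hBq : qq b p n < BB b p n)
    (m : ℕ) (h : phiAux b p n m ≤ a) :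
    th a b p n ≤ (al p n)^m := by
  have hcl := phiAux_closed hb hp hn hal ha1 hbn m h
  rw [th, div_le_iff₀ (by linarith)]
  nlinarith [hcl, h]


lemma idL (hp : 0 < p) (hn : 1 ≤ n) :
    LL a b p n * (1 - al p n) = -Real.log (th a b p n) := by
  have h0 := (hn_pos hn).ne'
  have h1 := (hpn_pos hp hn).ne'
  rw [one_sub_al hn, LL]
  field_simp

lemma key (hp : 0 < p) (hn : 1 ≤ n)
    (hal0 : 0 < al p n) (hal1 : al p n < 1)
    (hth : 0 < th a b p n)
    (haA : 0 ≤ a - AA a b p n)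
    (hU1 : AA a b p n + BB b p n + (a - AA a b p n) * al p n ≤ 2*b)
    (hE2 : AA a b p n + BB b p n * LL a b p n + (a - AA a b p n) * th a b p n
        ≤ b*(LL a b p n + 1))
    (m : ℕ) (hm : 1 ≤ m) (hθm : th a b p n ≤ (al p n)^m) :
    AA a b p n + BB b p n * (m:ℝ) + (a - AA a b p n) * (al p n)^m ≤ b*((m:ℝ)+1) := by
  have hLid := idL (a := a) (b := b) hp hn
  set α := al p n with hα
  set A := AA a b p n with hA
  set B := BB b p n with hB
  set θ := th a b p n with hθ
  set L := LL a b p n with hL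
  clear_value α A B θ L
  have h1α : 0 < 1 - α := by linarith
  have hlogα : Real.log α ≤ α - 1 := Real.log_le_sub_one_of_pos hal0
  have hm0 : (0:ℝ) ≤ (m:ℝ) := Nat.cast_nonneg m
  -- m ≤ L
  have hmL : (m:ℝ) ≤ L := by
    have hlog1 : Real.log θ ≤ Real.log (α^m) := Real.log_le_log hth hθm
    rw [Real.log_pow] at hlog1
    have h2 : (m:ℝ)*Real.log α ≤ (m:ℝ)*(α-1) := mul_le_mul_of_nonneg_left hlogα hm0
    have h3 : (m:ℝ)*(1-α) ≤ -Real.log θ := by nlinarith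
    rw [← hLid] at h3
    exact le_of_mul_le_mul_right (by linarith [h3]) h1α
  have hL0 : 0 ≤ L := le_trans hm0 hmL
  -- exp (L log α) ≤ θ
  have hαL : Real.exp (L * Real.log α) ≤ θ := by
    have h4 : L * Real.log α ≤ Real.log θ := by
      have h5 : L * Real.log α ≤ L * (α - 1) := mul_le_mul_of_nonneg_left hlogα hL0
      nlinarith [hLid]
    calc Real.exp (L * Real.log α) ≤ Real.exp (Real.log θ) := Real.exp_le_exp.mpr h4
      _ = θ := Real.exp_log hth
  rcases eq_or_lt_of_le hm with hm1 | hm2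
  · -- m = 1
    subst hm1
    push_cast
    rw [pow_one]
    linarith [hU1]
  · -- 2 ≤ m
    have hm2' : (2:ℝ) ≤ (m:ℝ) := by exact_mod_cast hm2
    have hL2 : (2:ℝ) ≤ L := le_trans hm2' hmL
    have hL1ne : L - 1 ≠ 0 := by intro hc; nlinarith
    set lam := (L - (m:ℝ))/(L-1) with hlam_def
    set mu := ((m:ℝ)-1)/(L-1) with hmu_def
    have hlam : 0 ≤ lam := div_nonneg (by linarith) (by linarith)
    have hmu : 0 ≤ mu := div_nonneg (by linarith) (by linarith)
    have hsum : lam + mu = 1 := by rw [hlam_def, hmu_def]; field_simp; ring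
    have hid1 : (m:ℝ) = lam + mu * L := by rw [hlam_def, hmu_def]; field_simp; ring
    -- chord bound on α^m
    have hαm : (α:ℝ)^m = Real.exp ((m:ℝ) * Real.log α) := by
      rw [← Real.log_pow, Real.exp_log (pow_pos hal0 m)]
    have hcomb : (m:ℝ) * Real.log α = lam * Real.log α + mu * (L * Real.log α) := by
      rw [hlam_def, hmu_def]; field_simp; ring
    have hconv := convexOn_exp.2 (Set.mem_univ (Real.log α)) (Set.mem_univ (L * Real.log α))
        hlam hmu hsum
    simp only [smul_eq_mul] at hconv
    rw [← hcomb] at hconv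
    rw [Real.exp_log hal0] at hconv
    have hchord : (α:ℝ)^m ≤ lam * α + mu * θ := by
      rw [hαm]
      calc Real.exp ((m:ℝ) * Real.log α) ≤ lam * α + mu * Real.exp (L * Real.log α) := hconv
        _ ≤ lam * α + mu * θ := by nlinarith [mul_le_mul_of_nonneg_left hαL hmu]
    have step1 : (a-A) * (α^m) ≤ (a-A)*(lam*α + mu*θ) := mul_le_mul_of_nonneg_left hchord haA
    have f1 : lam*(A + B + (a-A)*α) ≤ lam*(2*b) := mul_le_mul_of_nonneg_left hU1 hlam
    have f2 : mu*(A + B*L + (a-A)*θ) ≤ mu*(b*(L+1)) := mul_le_mul_of_nonneg_left hE2 hmu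
    have hid2 : lam*(2*b) + mu*(b*(L+1)) = b*((m:ℝ)+1) := by
      linear_combination b*hsum - b*hid1
    have expand2 : A + B*(m:ℝ) + (a-A)*(lam*α + mu*θ)
        = lam*(A + B + (a-A)*α) + mu*(A + B*L + (a-A)*θ) := by
      linear_combination B*hid1 + (-A)*hsum
    linarith [step1, f1, f2, hid2, expand2]

lemma phibarAux_nonneg (ha : 0 < a) (hb : 1 < b) (hp : 0 < p) (hn : 1 ≤ n)
    (hal : 0 ≤ al p n) : ∀ m, 0 ≤ phibarAux a b p n m := by
  intro m
  induction m with
  | zero => rw [phibarAux]; linarith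
  | succ m ih =>
      rw [phibarAux]
      have h0 := hn_pos hn
      have hm2 : (0:ℝ) < (m:ℝ) + 2 := by positivity
      have hc : (0:ℝ) ≤ 1 - 1/((m:ℝ)+2) := by
        rw [sub_nonneg, div_le_one hm2]; linarith
      have t1 : (0:ℝ) ≤ (1 / (n : ℝ) ^ 2) * max (n : ℝ) (phibarAux a b p n m) :=
        mul_nonneg (by positivity) (le_trans h0.le (le_max_left _ _))
      have t2 : (0:ℝ) ≤ (p / n) * max b (phibarAux a b p n m) :=
        mul_nonneg (by positivity) (le_trans (by linarith) (le_max_left _ _))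
      have t3 : (0:ℝ) ≤ (1 - p / n - 1 / (n : ℝ) ^ 2) * max 0 (phibarAux a b p n m) := by
        apply mul_nonneg _ (le_max_left _ _)
        rw [al] at hal; linarith
      have t4 : (0:ℝ) ≤ max a (phiAux b p n m) / ((m : ℝ) + 2) :=
        div_nonneg (le_trans ha.le (le_max_left _ _)) hm2.le
      have := mul_nonneg hc (by linarith : (0:ℝ) ≤ (1 / (n : ℝ) ^ 2) * max (n : ℝ) (phibarAux a b p n m) + (p / n) * max b (phibarAux a b p n m) + (1 - p / n - 1 / (n : ℝ) ^ 2) * max 0 (phibarAux a b p n m))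
      linarith

lemma main_ind (ha : 0 < a) (ha1 : a < 1) (hb : 1 < b) (hp : 0 < p) (hn : 1 ≤ n)
    (hal0 : 0 < al p n) (hal1 : al p n < 1) (hbn : b ≤ (n:ℝ))
    (hBq : qq b p n < BB b p n)
    (hth : 0 < th a b p n)
    (haA : 0 ≤ a - AA a b p n)
    (hU1 : AA a b p n + BB b p n + (a - AA a b p n) * al p n ≤ 2*b)
    (hE2 : AA a b p n + BB b p n * LL a b p n + (a - AA a b p n) * th a b p n
        ≤ b*(LL a b p n + 1)) :
    ∀ m, phiAux b p n m ≤ a →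
      (((m:ℝ)+1) * phibarAux a b p n m
          = AA a b p n + BB b p n * (m:ℝ) + (a - AA a b p n) * (al p n)^m
        ∧ phibarAux a b p n m ≤ b) := by
  intro m
  induction m with
  | zero =>
      intro _
      constructor
      · rw [phibarAux, pow_zero]
        push_cast
        ring
      · rw [phibarAux]; linarith
  | succ m ih =>
      intro h1
      have h0 : phiAux b p n m ≤ a := le_trans (phiAux_le_succ hb hp hn hal0.le m) h1
      obtain ⟨ih_eq, ih_le⟩ := ih h0
      have hψ0 : 0 ≤ phibarAux a b p n m := phibarAux_nonneg ha hb hp hn hal0.le m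
      have hn0 := hn_pos hn
      have hm2 : (0:ℝ) < (m:ℝ) + 2 := by positivity
      -- rewrite the recursion in linear form
      have hmaxa : max a (phiAux b p n m) = a := max_eq_left h0
      have hmaxn : max (n:ℝ) (phibarAux a b p n m) = (n:ℝ) := max_eq_left (by linarith)
      have hmaxb : max b (phibarAux a b p n m) = b := max_eq_left ih_le
      have hmax0 : max 0 (phibarAux a b p n m) = phibarAux a b p n m := max_eq_right hψ0
      have heq1 : phibarAux a b p n (m+1)
          = a/((m:ℝ)+2) + (1 - 1/((m:ℝ)+2)) * (qq b p n + al p n * phibarAux a b p n m) := by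
        rw [phibarAux, hmaxa, hmaxn, hmaxb, hmax0, qq, al]
        have h2 : (1 / (n : ℝ) ^ 2) * (n:ℝ) + (p / n) * b
            + (1 - p / n - 1 / (n : ℝ) ^ 2) * phibarAux a b p n m
            = (1 + b*p)/(n:ℝ) + (1 - p/(n:ℝ) - 1/(n:ℝ)^2) * phibarAux a b p n m := by
          field_simp
        rw [h2]
      have e2 : (((m:ℕ):ℝ)+1+1) * phibarAux a b p n (m+1)
          = a + (((m:ℕ):ℝ)+1)*(qq b p n) + al p n * ((((m:ℕ):ℝ)+1) * phibarAux a b p n m) := by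
        rw [heq1]
        have hne : ((m:ℕ):ℝ)+2 ≠ 0 := by positivity
        field_simp
        ring
      rw [ih_eq] at e2
      have hAid := idA (a := a) (b := b) hp hn
      have hBid := idB (b := b) (p := p) hp hn
      have hfm : (((m+1:ℕ)):ℝ) = ((m:ℕ):ℝ) + 1 := by push_cast; ring
      have goal_eq : (((m+1:ℕ):ℝ)+1) * phibarAux a b p n (m+1)
          = AA a b p n + BB b p n * (((m+1:ℕ)):ℝ) + (a - AA a b p n) * (al p n)^(m+1) := by
        rw [hfm]
        rw [pow_succ]
        linear_combination e2 - hAid - ((m:ℕ):ℝ)*hBid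
      refine ⟨goal_eq, ?_⟩
      have hkey := key hp hn hal0 hal1 hth haA hU1 hE2 (m+1) (Nat.le_add_left 1 m)
          (th_le hb hp hn hal0.le ha1 hbn hBq (m+1) h1)
      rw [hfm] at goal_eq hkey
      nlinarith [goal_eq, hkey, hm2]

end

noncomputable def Bu (b p : ℝ) (u : ℝ) : ℝ := (1+b*p)/(p+u)
noncomputable def quu (b p : ℝ) (u : ℝ) : ℝ := (1+b*p)*u
noncomputable def Au (a b p : ℝ) (u : ℝ) : ℝ := (a + quu b p u - Bu b p u)/(p+u)
noncomputable def thu (a b p : ℝ) (u : ℝ) : ℝ :=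
  (Bu b p u - a)/(Bu b p u - quu b p u)
noncomputable def Lu (a b p : ℝ) (u : ℝ) : ℝ := -Real.log (thu a b p u)/(p+u)
noncomputable def Gg (a b p : ℝ) (u : ℝ) : ℝ :=
  Au a b p u + Bu b p u * Lu a b p u + (a*u - Au a b p u)*thu a b p u
    - b*(Lu a b p u + u)


section
variable {a b p : ℝ} {n : ℕ}

lemma thu_zero (ha : 0 < a) (ha1 : a < 1) (hb : 1 < b) (hp : 0 < p) :
    thu a b p 0 = (1 + (b-a)*p)/(1+b*p) := by
  have h1bp : (0:ℝ) < 1 + b*p := by nlinarith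
  have hBu0 : Bu b p 0 = (1+b*p)/p := by rw [Bu, add_zero]
  have hx : (0:ℝ) < (1+b*p)/p - a := by
    rw [sub_pos, lt_div_iff₀ hp]
    nlinarith
  rw [thu, hBu0, quu, mul_zero, sub_zero]
  rw [div_eq_div_iff (by positivity) h1bp.ne']
  field_simp
  try ring
  try exact Or.inl trivial

lemma Gg_cont (ha : 0 < a) (ha1 : a < 1) (hb : 1 < b) (hp : 0 < p) :
    ContinuousAt (Gg a b p) 0 := by
  have h1bp : (0:ℝ) < 1 + b*p := by nlinarith
  have hpne : p + (0:ℝ) ≠ 0 := by simpa using hp.ne'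
  have hBu : ContinuousAt (Bu b p) 0 := by
    unfold Bu
    apply ContinuousAt.div continuousAt_const (by fun_prop) hpne
  have hqu : ContinuousAt (quu b p) 0 := by unfold quu; fun_prop
  have hAu : ContinuousAt (Au a b p) 0 := by
    unfold Au
    apply ContinuousAt.div _ (by fun_prop) hpne
    exact (continuousAt_const.add hqu).sub hBu
  have hBq0 : Bu b p 0 - quu b p 0 ≠ 0 := by
    rw [Bu, quu]
    have : (1+b*p)/(p+0) > 0 := by positivity
    simp only [mul_zero, sub_zero]
    positivity
  have hthu : ContinuousAt (thu a b p) 0 := by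
    unfold thu
    apply ContinuousAt.div (hBu.sub continuousAt_const) (hBu.sub hqu) hBq0
  have hthu0 : thu a b p 0 > 0 := by
    rw [thu_zero ha ha1 hb hp]
    have : (0:ℝ) < 1 + (b-a)*p := by nlinarith
    positivity
  have hlog : ContinuousAt (fun u => Real.log (thu a b p u)) 0 :=
    (Real.continuousAt_log hthu0.ne').comp hthu
  have hLu : ContinuousAt (Lu a b p) 0 := by
    unfold Lu
    apply ContinuousAt.div hlog.neg (by fun_prop) hpne
  unfold Gg
  exact ((hAu.add (hBu.mul hLu)).add
    (((continuousAt_const.mul continuousAt_id).sub hAu).mul hthu)).sub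
    (continuousAt_const.mul (hLu.add continuousAt_id))

lemma Gg_zero_neg (ha : 0 < a) (ha1 : a < 1) (hb : 1 < b) (hp : 0 < p)
    (hs : (1 + b * p) / (1 + (b - a) * p) * Real.log ((1 + b * p) / (1 + (b - a) * p)) < a * p) :
    Gg a b p 0 < 0 := by
  have h1bp : (0:ℝ) < 1 + b*p := by nlinarith
  have h1x : (0:ℝ) < 1 + (b-a)*p := by nlinarith
  set r : ℝ := (1 + b * p) / (1 + (b - a) * p) with hrdef
  have hr0 : 0 < r := by positivity
  have hlog_eq : Real.log (thu a b p 0) = - Real.log r := by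
    rw [thu_zero ha ha1 hb hp, hrdef, ← Real.log_inv, inv_div]
  have hBu0 : Bu b p 0 = (1+b*p)/p := by rw [Bu, add_zero]
  have hqu0 : quu b p 0 = 0 := by rw [quu, mul_zero]
  have hAu0 : Au a b p 0 = (a - (1+b*p)/p)/p := by
    rw [Au, hBu0, hqu0, add_zero, add_zero]
  have hLu0 : Lu a b p 0 = Real.log r / p := by
    rw [Lu, hlog_eq, add_zero, neg_neg]
  have hGg0 : Gg a b p 0 = (Real.log r - a*p/r)/p^2 := by
    rw [Gg, hAu0, hBu0, hLu0, thu_zero ha ha1 hb hp, hrdef]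
    rw [mul_zero, add_zero]
    field_simp
    ring
  rw [hGg0]
  have h2 : Real.log r < a*p/r := by
    rw [lt_div_iff₀ hr0]
    nlinarith [hs]
  have hp2 : (0:ℝ) < p^2 := by positivity
  apply div_neg_of_neg_of_pos _ hp2
  linarith

lemma thu_eq (hp : 0 < p) (hn : 1 ≤ n) (hBq : qq b p n < BB b p n) :
    thu a b p (1/(n:ℝ)) = th a b p n := by
  have hn0 : (0:ℝ) < (n:ℝ) := by exact_mod_cast Nat.lt_of_lt_of_le Nat.zero_lt_one hn
  have hpn : (0:ℝ) < p*(n:ℝ)+1 := by positivity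
  have hBuq : Bu b p (1/(n:ℝ)) = BB b p n := by
    rw [Bu, BB]
    rw [div_eq_div_iff (by positivity) hpn.ne']
    field_simp
  have hquq : quu b p (1/(n:ℝ)) = qq b p n := by
    rw [quu, qq]; field_simp
  rw [thu, hBuq, hquq, th]

lemma Gg_eq (hp : 0 < p) (hn : 1 ≤ n) (hBq : qq b p n < BB b p n) :
    Gg a b p (1/(n:ℝ))
      = (AA a b p n + BB b p n * LL a b p n + (a - AA a b p n) * th a b p n
          - b*(LL a b p n + 1))/(n:ℝ) := by
  have hn0 : (0:ℝ) < (n:ℝ) := by exact_mod_cast Nat.lt_of_lt_of_le Nat.zero_lt_one hn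
  have hpn : (0:ℝ) < p*(n:ℝ)+1 := by positivity
  have hpu : (0:ℝ) < p + 1/(n:ℝ) := by positivity
  have hBuq : Bu b p (1/(n:ℝ)) = BB b p n := by
    rw [Bu, BB]
    rw [div_eq_div_iff (by positivity) hpn.ne']
    field_simp
  have hquq : quu b p (1/(n:ℝ)) = qq b p n := by
    rw [quu, qq]; field_simp
  have hAuq : Au a b p (1/(n:ℝ)) = AA a b p n / (n:ℝ) := by
    rw [Au, hBuq, hquq, AA]
    rw [div_eq_div_iff hpu.ne' hn0.ne']
    field_simp
  have hLuq : Lu a b p (1/(n:ℝ)) = LL a b p n / (n:ℝ) := by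
    rw [Lu, thu_eq hp hn hBq, LL]
    rw [div_eq_div_iff hpu.ne' hn0.ne']
    field_simp
  rw [Gg, hAuq, hBuq, hLuq, thu_eq hp hn hBq]
  field_simp
  try ring

end
end Stmt7

/-- eventually `k̄_n ≤ j_n`: the gambler accepts the value `a` later than it
accepts the value `b` not having seen the value `a`. -/

theorem stmt_7 (a b p : ℝ)
    (ha : 0 < a) (ha1 : a < 1) (hb : 1 < b) (hp : 0 < p)
    (hlog : Real.log (1 + p * b) < p)
    (hI : (1 + b * p) / (1 + (b - a) * p) * Real.log ((1 + b * p) / (1 + (b - a) * p)) ≤ a * p)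
    (hII : (2 - p) * (b - a) < 1)
    (hIII : (1 - (2 - p) * (b - a)) / (1 + p * (b - a))
        < 1 + (1 / p) * Real.log ((1 + p * (b - a)) / (1 + p * b)))
    (hIV : 0 ≤ 2 + p * b * (1 - p * (b - a)))
    (hV : b * p * (1 + (b - a) * p) / ((1 + p * b) * Real.log (1 + p * b)) < 1)
    :
    ∃ N : ℕ, ∀ n : ℕ, N ≤ n → kbarn a b p n ≤ jn a b p n := by
  classical
  open Stmt7 in
  have hstrict := strict_I a b p ha ha1 hb hp hI hIII
  have ev1 : ∀ᶠ n : ℕ in atTop, 1 ≤ n := eventually_ge_atTop 1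
  have hcast : Tendsto (fun n : ℕ => (n:ℝ)) atTop atTop := tendsto_natCast_atTop_atTop
  have ev2 : ∀ᶠ n : ℕ in atTop, b ≤ (n:ℝ) := hcast.eventually_ge_atTop b
  have hu : Tendsto (fun n : ℕ => 1/(n:ℝ)) atTop (nhds 0) := tendsto_one_div_atTop_nhds_zero_nat
  have hsum0 : Tendsto (fun n : ℕ => p/(n:ℝ) + 1/(n:ℝ)^2) atTop (nhds 0) := by
    have h1 : Tendsto (fun n : ℕ => p * (1/(n:ℝ))) atTop (nhds (p * 0)) := hu.const_mul p
    have h2 : Tendsto (fun n : ℕ => (1/(n:ℝ)) * (1/(n:ℝ))) atTop (nhds (0*0)) := hu.mul hu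
    have h3 := h1.add h2
    simp only [mul_zero, zero_mul, add_zero] at h3
    apply h3.congr
    intro n
    rw [mul_one_div, div_mul_div_comm, one_mul, ← sq]
  have ev3 : ∀ᶠ n : ℕ in atTop, p/(n:ℝ) + 1/(n:ℝ)^2 < 1 :=
    hsum0.eventually_lt_const (by norm_num)
  have hq0 : Tendsto (fun n : ℕ => (1+b*p)/(n:ℝ)) atTop (nhds 0) := by
    have h1 := hu.const_mul (1+b*p)
    simp only [mul_zero] at h1
    apply h1.congr
    intro n
    rw [mul_one_div]
  have ev4 : ∀ᶠ n : ℕ in atTop, (1+b*p)/(n:ℝ) ≤ a :=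
    (hq0.eventually_lt_const ha).mono (fun n h => h.le)
  have ev5 : ∀ᶠ n : ℕ in atTop, a + (1+b*p)/(n:ℝ) ≤ b := by
    have h := hq0.eventually_lt_const (show (0:ℝ) < b - a by linarith)
    exact h.mono (fun n hn => by linarith)
  have ev6 : ∀ᶠ n : ℕ in atTop, Stmt7.Gg a b p (1/(n:ℝ)) < 0 := by
    have hc := (Stmt7.Gg_cont ha ha1 hb hp).tendsto.comp hu
    exact hc.eventually_lt_const (Stmt7.Gg_zero_neg ha ha1 hb hp hstrict)
  have evAll := ((((ev1.and ev2).and ev3).and ev4).and ev5).and ev6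
  rw [eventually_atTop] at evAll
  obtain ⟨N, hN⟩ := evAll
  refine ⟨N, fun n hn => ?_⟩
  obtain ⟨⟨⟨⟨⟨hn1, hbn⟩, hal'⟩, hqa⟩, hq5⟩, hGgn⟩ := hN n hn
  have hn0 : (0:ℝ) < (n:ℝ) := Stmt7.hn_pos hn1
  have hal0 : 0 < Stmt7.al p n := by rw [Stmt7.al]; linarith
  have hal1 : Stmt7.al p n < 1 := by
    rw [Stmt7.al]
    have t1 : 0 < p/(n:ℝ) := by positivity
    have t2 : (0:ℝ) ≤ 1/(n:ℝ)^2 := by positivity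
    linarith
  have hqq_pos : 0 < Stmt7.qq b p n := by rw [Stmt7.qq]; positivity
  have hpn1 : (0:ℝ) < p*(n:ℝ)+1 := Stmt7.hpn_pos hp hn1
  have hBB_pos : 0 < Stmt7.BB b p n := by
    rw [Stmt7.BB]; positivity
  have hidB := Stmt7.idB (b := b) hp hn1
  have hBq : Stmt7.qq b p n < Stmt7.BB b p n := by
    nlinarith [hidB, mul_pos hBB_pos hal0]
  have hBb : b ≤ Stmt7.BB b p n := by
    rw [Stmt7.BB, le_div_iff₀ hpn1]
    nlinarith [hbn]
  have hth : 0 < Stmt7.th a b p n := by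
    rw [Stmt7.th]
    apply div_pos <;> linarith
  have hqa' : Stmt7.qq b p n ≤ a := by rw [Stmt7.qq]; exact hqa
  have hq5' : a + Stmt7.qq b p n ≤ b := by rw [Stmt7.qq]; exact hq5
  have hAA_np : Stmt7.AA a b p n ≤ 0 := by
    rw [Stmt7.AA]
    apply div_nonpos_of_nonpos_of_nonneg _ hpn1.le
    apply mul_nonpos_of_nonpos_of_nonneg _ (by positivity)
    linarith
  have haA : 0 ≤ a - Stmt7.AA a b p n := by linarith
  have hidA := Stmt7.idA (a := a) (b := b) hp hn1
  have hU1 : Stmt7.AA a b p n + Stmt7.BB b p n + (a - Stmt7.AA a b p n) * Stmt7.al p n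
      ≤ 2*b := by
    have hid : Stmt7.AA a b p n + Stmt7.BB b p n + (a - Stmt7.AA a b p n) * Stmt7.al p n
        = a + Stmt7.qq b p n + Stmt7.al p n * a := by
      linear_combination hidA
    rw [hid]
    nlinarith [hal1, ha, hq5', hal0]
  have hE2 : Stmt7.AA a b p n + Stmt7.BB b p n * Stmt7.LL a b p n
      + (a - Stmt7.AA a b p n) * Stmt7.th a b p n ≤ b*(Stmt7.LL a b p n + 1) := by
    rw [Stmt7.Gg_eq hp hn1 hBq] at hGgn
    have hlt : Stmt7.AA a b p n + Stmt7.BB b p n * Stmt7.LL a b p n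
        + (a - Stmt7.AA a b p n) * Stmt7.th a b p n - b*(Stmt7.LL a b p n + 1) < 0 := by
      by_contra hcon
      push_neg at hcon
      have := div_nonneg hcon hn0.le
      linarith
    linarith
  have hnS : n ∈ {k : ℕ | 1 ≤ k ∧ k ≤ n ∧ phi b p n k ≤ a} := by
    refine ⟨hn1, le_refl n, ?_⟩
    show phiAux b p n (n - n) ≤ a
    rw [Nat.sub_self, phiAux]
    exact hqa
  have hjmem : jn a b p n ∈ {k : ℕ | 1 ≤ k ∧ k ≤ n ∧ phi b p n k ≤ a} :=
    Nat.sInf_mem ⟨n, hnS⟩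
  obtain ⟨hj1, hj2, hj3⟩ := hjmem
  have hphi_le : phiAux b p n (n - jn a b p n) ≤ a := hj3
  have hmain := (Stmt7.main_ind ha ha1 hb hp hn1 hal0 hal1 hbn hBq hth haA hU1 hE2
      (n - jn a b p n) hphi_le).2
  apply Nat.sInf_le
  exact ⟨hj1, hj2, hmain⟩
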